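/- MIMO improves sensing: for M ≥ 1 antennas, P^M_FA,CSS(c) = 1 - Q(√M·(Δδ/σ)·√(((1-ρ)c+2ρ)/(1+ρ)) + Q⁻¹(β)) is nonincreasing in M (for Δδ < 0), and therefore the MIMO return function v^M(d,x) = P^M_FA,LSS - P^M_FA,CSS(x·d) satisfies v^M(d,x) ≥ v¹(d,x)... specifically, P^M_FA,CSS(c) ≤ P¹_FA,CSS(c) for all c ≥ 1 and M ≥ 1. -/

import Mathlib

open Real

/-- The Gaussian tail function `Q(x) = (1/√(2π)) ∫_x^∞ exp(-u²/2) du`. -/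
noncomputable def gaussQ (x : ℝ) : ℝ :=
  (Real.sqrt (2 * Real.pi))⁻¹ * ∫ u in Set.Ioi x, Real.exp (-u ^ 2 / 2)

/-- The MIMO cooperative false-alarm probability
`P^M_FA,CSS(c) = 1 - Q(√M·(Δδ/σ)·√(((1-ρ)c+2ρ)/(1+ρ)) + Q⁻¹(β))`. -/
noncomputable def PfaCSS_MIMO (Δδ σ ρ Qinvβ : ℝ) (M : ℕ) (c : ℝ) : ℝ :=
  1 - gaussQ (Real.sqrt M * (Δδ / σ) * Real.sqrt (((1 - ρ) * c + 2 * ρ) / (1 + ρ))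
      + Qinvβ)

lemma integrable_gauss_kernel : MeasureTheory.Integrable (fun u : ℝ => Real.exp (-u ^ 2 / 2)) := by
  have h := integrable_exp_neg_mul_sq (b := (1/2 : ℝ)) (by norm_num)
  convert h using 2 with u
  ring_nf

lemma gaussQ_antitone : Antitone gaussQ := by
  intro x y hxy
  unfold gaussQ
  apply mul_le_mul_of_nonneg_left _ (by positivity)
  apply MeasureTheory.setIntegral_mono_set
  · exact integrable_gauss_kernel.integrableOn
  · filter_upwards with u using (Real.exp_pos _).le
  · exact Filter.Eventually.of_forall (Set.Ioi_subset_Ioi hxy)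

/-- MIMO improves sensing: for `Δδ < 0`, `P^M_FA,CSS(c)` is nonincreasing in the
number of antennas `M ≥ 1`; in particular `P^M_FA,CSS(c) ≤ P¹_FA,CSS(c)` for all
`c ≥ 1` and `M ≥ 1`. -/
theorem mimo_improves_sensing (Δδ σ ρ β Qinvβ : ℝ)
    (hΔδ : Δδ < 0) (hσ : 0 < σ) (hρ0 : 0 ≤ ρ) (hρ1 : ρ < 1)
    (hβ0 : 0 < β) (hβ1 : β < 1) (hQinv : gaussQ Qinvβ = β) :
    (∀ M N : ℕ, 1 ≤ M → M ≤ N → ∀ c : ℝ, 1 ≤ c →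
      PfaCSS_MIMO Δδ σ ρ Qinvβ N c ≤ PfaCSS_MIMO Δδ σ ρ Qinvβ M c) ∧
    (∀ M : ℕ, 1 ≤ M → ∀ c : ℝ, 1 ≤ c →
      PfaCSS_MIMO Δδ σ ρ Qinvβ M c ≤ PfaCSS_MIMO Δδ σ ρ Qinvβ 1 c) := by
  have key : ∀ M N : ℕ, M ≤ N → ∀ c : ℝ,
      PfaCSS_MIMO Δδ σ ρ Qinvβ N c ≤ PfaCSS_MIMO Δδ σ ρ Qinvβ M c := by
    intro M N hMN c
    unfold PfaCSS_MIMO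
    have harg : Real.sqrt N * (Δδ / σ) * Real.sqrt (((1 - ρ) * c + 2 * ρ) / (1 + ρ))
        + Qinvβ ≤ Real.sqrt M * (Δδ / σ) * Real.sqrt (((1 - ρ) * c + 2 * ρ) / (1 + ρ))
        + Qinvβ := by
      apply add_le_add_left
      have hs : (0:ℝ) ≤ Real.sqrt (((1 - ρ) * c + 2 * ρ) / (1 + ρ)) := Real.sqrt_nonneg _
      have hneg : (Δδ / σ) * Real.sqrt (((1 - ρ) * c + 2 * ρ) / (1 + ρ)) ≤ 0 :=
        mul_nonpos_of_nonpos_of_nonneg (div_nonpos_of_nonpos_of_nonneg hΔδ.le hσ.le) hs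
      have hM : Real.sqrt M ≤ Real.sqrt N := by
        apply Real.sqrt_le_sqrt; exact_mod_cast hMN
      calc Real.sqrt N * (Δδ / σ) * Real.sqrt (((1 - ρ) * c + 2 * ρ) / (1 + ρ))
          = Real.sqrt N * ((Δδ / σ) * Real.sqrt (((1 - ρ) * c + 2 * ρ) / (1 + ρ))) := by ring
        _ ≤ Real.sqrt M * ((Δδ / σ) * Real.sqrt (((1 - ρ) * c + 2 * ρ) / (1 + ρ))) :=
            mul_le_mul_of_nonpos_right hM hneg
        _ = Real.sqrt M * (Δδ / σ) * Real.sqrt (((1 - ρ) * c + 2 * ρ) / (1 + ρ)) := by ring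
    linarith [gaussQ_antitone harg]
  exact ⟨fun M N _ hMN c _ => key M N hMN c, fun M hM c _ => key 1 M hM c⟩
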